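/- arXiv:1209.1924 — 4 statements merged into one kernel-verified Lean document; each statement's English description precedes it below -/
import Mathlib

section
/- For all t ≥ 0, a ∈ ℝ and b < 0, the Jacobian determinant of the map Φ(t)(a,b) = (X(t,a,b), Z(t,a,b)) equals 1 − e^{2kb}, which is strictly positive. -/
noncomputable def gerstnerX (k c m t a b : ℝ) : ℝ :=
  a + (c - m) * t - Real.exp (k * b) / k * Real.sin (k * (a - m * t))

noncomputable def gerstnerZ (k m t a b : ℝ) : ℝ :=
  b + Real.exp (k * b) / k * Real.cos (k * (a - m * t))

/-- the Jacobian determinant X_a Z_b − X_b Z_a equals 1 − e^{2kb} > 0. -/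
theorem stmt_1 (k c m : ℝ) (hk : 0 < k) (t a b : ℝ) (ht : 0 ≤ t) (hb : b < 0) :
    deriv (fun a' => gerstnerX k c m t a' b) a * deriv (fun b' => gerstnerZ k m t a b') b
      - deriv (fun b' => gerstnerX k c m t a b') b * deriv (fun a' => gerstnerZ k m t a' b) a
      = 1 - Real.exp (2 * k * b)
    ∧ 0 < 1 - Real.exp (2 * k * b) := by
  have hk0 : k ≠ 0 := ne_of_gt hk
  set E := Real.exp (k * b) with hE
  set θ := k * (a - m * t) with hθ
  have hXa : HasDerivAt (fun a' => gerstnerX k c m t a' b)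
      (1 - E * Real.cos θ) a := by
    have h1 : HasDerivAt (fun a' : ℝ => k * (a' - m * t)) k a := by
      simpa using ((hasDerivAt_id a).sub_const (m * t)).const_mul k
    have h2 : HasDerivAt (fun a' : ℝ => Real.sin (k * (a' - m * t)))
        (Real.cos θ * k) a := by
        have := (Real.hasDerivAt_sin θ).comp a h1; exact this
    have h3 : HasDerivAt (fun a' : ℝ => a' + (c - m) * t - E / k * Real.sin (k * (a' - m * t)))
        (1 - E / k * (Real.cos θ * k)) a :=
      ((hasDerivAt_id a).add_const ((c - m) * t)).sub (h2.const_mul (E / k))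
    have : E / k * (Real.cos θ * k) = E * Real.cos θ := by field_simp
    rw [this] at h3
    exact h3
  have hZb : HasDerivAt (fun b' => gerstnerZ k m t a b')
      (1 + E * Real.cos θ) b := by
    have h1 : HasDerivAt (fun b' : ℝ => Real.exp (k * b')) (Real.exp (k * b) * k) b :=
      (Real.hasDerivAt_exp (k * b)).comp b (by simpa using (hasDerivAt_id b).const_mul k)
    have h3 : HasDerivAt (fun b' : ℝ => b' + Real.exp (k * b') / k * Real.cos θ)
        (1 + Real.exp (k * b) * k / k * Real.cos θ) b :=
      (hasDerivAt_id b).add ((h1.div_const k).mul_const (Real.cos θ))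
    have : Real.exp (k * b) * k / k * Real.cos θ = E * Real.cos θ := by field_simp; rw [hE]; ring
    rw [this] at h3
    exact h3
  have hXb : HasDerivAt (fun b' => gerstnerX k c m t a b')
      (-(E * Real.sin θ)) b := by
    have h1 : HasDerivAt (fun b' : ℝ => Real.exp (k * b')) (Real.exp (k * b) * k) b :=
      (Real.hasDerivAt_exp (k * b)).comp b (by simpa using (hasDerivAt_id b).const_mul k)
    have h3 : HasDerivAt (fun b' : ℝ => a + (c - m) * t - Real.exp (k * b') / k * Real.sin θ)
        (0 - Real.exp (k * b) * k / k * Real.sin θ) b :=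
      (hasDerivAt_const b _).sub ((h1.div_const k).mul_const (Real.sin θ))
    have : 0 - Real.exp (k * b) * k / k * Real.sin θ = -(E * Real.sin θ) := by
      field_simp; rw [hE]; ring
    rw [this] at h3
    exact h3
  have hZa : HasDerivAt (fun a' => gerstnerZ k m t a' b)
      (-(E * Real.sin θ)) a := by
    have h1 : HasDerivAt (fun a' : ℝ => k * (a' - m * t)) k a := by
      simpa using ((hasDerivAt_id a).sub_const (m * t)).const_mul k
    have h2 : HasDerivAt (fun a' : ℝ => Real.cos (k * (a' - m * t)))
        (-Real.sin θ * k) a := by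
        have := (Real.hasDerivAt_cos θ).comp a h1; exact this
    have h3 : HasDerivAt (fun a' : ℝ => b + E / k * Real.cos (k * (a' - m * t)))
        (0 + E / k * (-Real.sin θ * k)) a :=
      (hasDerivAt_const a b).add (h2.const_mul (E / k))
    have : 0 + E / k * (-Real.sin θ * k) = -(E * Real.sin θ) := by field_simp; ring
    rw [this] at h3
    exact h3
  rw [hXa.deriv, hZb.deriv, hXb.deriv, hZa.deriv]
  constructor
  · have hsc : Real.sin θ ^ 2 + Real.cos θ ^ 2 = 1 := Real.sin_sq_add_cos_sq θ
    have hE2 : E * E = Real.exp (2 * k * b) := by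
      rw [hE, ← Real.exp_add]; ring_nf
    nlinarith [hE2, hsc]
  · have : Real.exp (2 * k * b) < 1 := by
      rw [← Real.exp_zero]
      exact Real.exp_lt_exp.mpr (by nlinarith)
    linarith
end

section
/- The vorticity numerator of the Gerstner flow satisfies X_{tb}·X_a − X_{ta}·X_b − Z_{ta}·Z_b + Z_{tb}·Z_a = −2km·e^{2kb} for all t, a ∈ ℝ and b ∈ ℝ; consequently the vorticity γ = (X_{tb}·X_a − X_{ta}·X_b − Z_{ta}·Z_b + Z_{tb}·Z_a)/(1 − e^{2kb}) equals −2km·e^{2kb}/(1 − e^{2kb}). -/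
open Real

lemma hasDerivAt_arg (k m a t : ℝ) :
    HasDerivAt (fun t' => k * (a - m * t')) (k * -m) t := by
  simpa using (((hasDerivAt_id t).const_mul m).const_sub a).const_mul k

lemma hasDerivAt_arg_a (k m t a : ℝ) :
    HasDerivAt (fun a' => k * (a' - m * t)) (k * 1) a := by
  simpa using ((hasDerivAt_id a).sub_const (m * t)).const_mul k

lemma derivXt (k c m : ℝ) (hk : k ≠ 0) (t a b : ℝ) :
    deriv (fun t' => gerstnerX k c m t' a b) t
      = (c - m) + m * Real.exp (k * b) * Real.cos (k * (a - m * t)) := by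
  have h : HasDerivAt (fun t' => gerstnerX k c m t' a b)
      ((c - m) + m * Real.exp (k * b) * Real.cos (k * (a - m * t))) t := by
    have h1 := ((hasDerivAt_arg k m a t).sin.const_mul (Real.exp (k * b) / k))
    have h2 : HasDerivAt (fun t' => a + (c - m) * t') (c - m) t := by
      simpa using ((hasDerivAt_id t).const_mul (c - m)).const_add a
    have := h2.sub h1
    refine this.congr_deriv ?_
    field_simp
    ring
  exact h.deriv

lemma derivZt (k m : ℝ) (hk : k ≠ 0) (t a b : ℝ) :
    deriv (fun t' => gerstnerZ k m t' a b) t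
      = m * Real.exp (k * b) * Real.sin (k * (a - m * t)) := by
  have h : HasDerivAt (fun t' => gerstnerZ k m t' a b)
      (m * Real.exp (k * b) * Real.sin (k * (a - m * t))) t := by
    have h1 := ((hasDerivAt_arg k m a t).cos.const_mul (Real.exp (k * b) / k)).const_add b
    refine h1.congr_deriv ?_
    field_simp
  exact h.deriv

lemma derivXa (k c m : ℝ) (hk : k ≠ 0) (t a b : ℝ) :
    deriv (fun a' => gerstnerX k c m t a' b) a
      = 1 - Real.exp (k * b) * Real.cos (k * (a - m * t)) := by
  have h : HasDerivAt (fun a' => gerstnerX k c m t a' b)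
      (1 - Real.exp (k * b) * Real.cos (k * (a - m * t))) a := by
    have h1 := ((hasDerivAt_arg_a k m t a).sin.const_mul (Real.exp (k * b) / k))
    have h2 : HasDerivAt (fun a' => a' + (c - m) * t) 1 a :=
      (hasDerivAt_id a).add_const _
    refine (h2.sub h1).congr_deriv ?_
    field_simp
  exact h.deriv

lemma derivZa (k m : ℝ) (hk : k ≠ 0) (t a b : ℝ) :
    deriv (fun a' => gerstnerZ k m t a' b) a
      = -(Real.exp (k * b) * Real.sin (k * (a - m * t))) := by
  have h : HasDerivAt (fun a' => gerstnerZ k m t a' b)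
      (-(Real.exp (k * b) * Real.sin (k * (a - m * t)))) a := by
    have h1 := ((hasDerivAt_arg_a k m t a).cos.const_mul (Real.exp (k * b) / k)).const_add b
    refine h1.congr_deriv ?_
    field_simp
  exact h.deriv

lemma hasDerivAt_expkb (k b : ℝ) :
    HasDerivAt (fun b' => Real.exp (k * b')) (k * Real.exp (k * b)) b := by
  simpa [mul_comm] using ((hasDerivAt_id b).const_mul k).exp

lemma derivXb (k c m : ℝ) (hk : k ≠ 0) (t a b : ℝ) :
    deriv (fun b' => gerstnerX k c m t a b') b
      = -(Real.exp (k * b) * Real.sin (k * (a - m * t))) := by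
  have h : HasDerivAt (fun b' => gerstnerX k c m t a b')
      (-(Real.exp (k * b) * Real.sin (k * (a - m * t)))) b := by
    have h1 : HasDerivAt (fun b' => Real.exp (k * b') / k * Real.sin (k * (a - m * t)))
        (k * Real.exp (k * b) / k * Real.sin (k * (a - m * t))) b := by
      simpa [div_mul_eq_mul_div, mul_div_assoc, mul_comm, mul_left_comm] using
        ((hasDerivAt_expkb k b).div_const k).mul_const (Real.sin (k * (a - m * t)))
    have h2 := (hasDerivAt_const b (a + (c - m) * t)).sub h1
    refine h2.congr_deriv ?_
    field_simp
    ring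
  exact h.deriv

lemma derivZb (k m : ℝ) (hk : k ≠ 0) (t a b : ℝ) :
    deriv (fun b' => gerstnerZ k m t a b') b
      = 1 + Real.exp (k * b) * Real.cos (k * (a - m * t)) := by
  have h : HasDerivAt (fun b' => gerstnerZ k m t a b')
      (1 + Real.exp (k * b) * Real.cos (k * (a - m * t))) b := by
    have h1 : HasDerivAt (fun b' => Real.exp (k * b') / k * Real.cos (k * (a - m * t)))
        (k * Real.exp (k * b) / k * Real.cos (k * (a - m * t))) b :=
      ((hasDerivAt_expkb k b).div_const k).mul_const _
    have h2 := (hasDerivAt_id b).add h1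
    refine h2.congr_deriv ?_
    field_simp
  exact h.deriv

lemma derivXtb (k c m : ℝ) (hk : k ≠ 0) (t a b : ℝ) :
    deriv (fun b' => deriv (fun t' => gerstnerX k c m t' a b') t) b
      = k * m * Real.exp (k * b) * Real.cos (k * (a - m * t)) := by
  have heq : (fun b' => deriv (fun t' => gerstnerX k c m t' a b') t)
      = fun b' => (c - m) + m * Real.exp (k * b') * Real.cos (k * (a - m * t)) := by
    funext b'; exact derivXt k c m hk t a b'
  rw [heq]
  have h : HasDerivAt (fun b' => (c - m) + m * Real.exp (k * b') * Real.cos (k * (a - m * t)))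
      (k * m * Real.exp (k * b) * Real.cos (k * (a - m * t))) b := by
    have := (((hasDerivAt_expkb k b).const_mul m).mul_const
      (Real.cos (k * (a - m * t)))).const_add (c - m)
    refine this.congr_deriv ?_
    ring
  exact h.deriv

lemma derivZtb (k m : ℝ) (hk : k ≠ 0) (t a b : ℝ) :
    deriv (fun b' => deriv (fun t' => gerstnerZ k m t' a b') t) b
      = k * m * Real.exp (k * b) * Real.sin (k * (a - m * t)) := by
  have heq : (fun b' => deriv (fun t' => gerstnerZ k m t' a b') t)
      = fun b' => m * Real.exp (k * b') * Real.sin (k * (a - m * t)) := by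
    funext b'; exact derivZt k m hk t a b'
  rw [heq]
  have h := (((hasDerivAt_expkb k b).const_mul m).mul_const (Real.sin (k * (a - m * t))))
  have h' : HasDerivAt (fun b' => m * Real.exp (k * b') * Real.sin (k * (a - m * t)))
      (k * m * Real.exp (k * b) * Real.sin (k * (a - m * t))) b := by
    refine h.congr_deriv ?_; ring
  exact h'.deriv

lemma derivXta (k c m : ℝ) (hk : k ≠ 0) (t a b : ℝ) :
    deriv (fun a' => deriv (fun t' => gerstnerX k c m t' a' b) t) a
      = -(k * m * Real.exp (k * b) * Real.sin (k * (a - m * t))) := by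
  have heq : (fun a' => deriv (fun t' => gerstnerX k c m t' a' b) t)
      = fun a' => (c - m) + m * Real.exp (k * b) * Real.cos (k * (a' - m * t)) := by
    funext a'; exact derivXt k c m hk t a' b
  rw [heq]
  have h := (((hasDerivAt_arg_a k m t a).cos.const_mul
      (m * Real.exp (k * b)))).const_add (c - m)
  have h' : HasDerivAt (fun a' => (c - m) + m * Real.exp (k * b) * Real.cos (k * (a' - m * t)))
      (-(k * m * Real.exp (k * b) * Real.sin (k * (a - m * t)))) a := by
    refine h.congr_deriv ?_
    ring
  exact h'.deriv

lemma derivZta (k m : ℝ) (hk : k ≠ 0) (t a b : ℝ) :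
    deriv (fun a' => deriv (fun t' => gerstnerZ k m t' a' b) t) a
      = k * m * Real.exp (k * b) * Real.cos (k * (a - m * t)) := by
  have heq : (fun a' => deriv (fun t' => gerstnerZ k m t' a' b) t)
      = fun a' => m * Real.exp (k * b) * Real.sin (k * (a' - m * t)) := by
    funext a'; exact derivZt k m hk t a' b
  rw [heq]
  have h := ((hasDerivAt_arg_a k m t a).sin.const_mul (m * Real.exp (k * b)))
  have h' : HasDerivAt (fun a' => m * Real.exp (k * b) * Real.sin (k * (a' - m * t)))
      (k * m * Real.exp (k * b) * Real.cos (k * (a - m * t))) a := by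
    refine h.congr_deriv ?_
    ring
  exact h'.deriv

/-- vorticity numerator and resulting vorticity formula. -/
theorem stmt_5 (k c m : ℝ) (hk : 0 < k) (t a b : ℝ) :
    deriv (fun b' => deriv (fun t' => gerstnerX k c m t' a b') t) b
        * deriv (fun a' => gerstnerX k c m t a' b) a
      - deriv (fun a' => deriv (fun t' => gerstnerX k c m t' a' b) t) a
        * deriv (fun b' => gerstnerX k c m t a b') b
      - deriv (fun a' => deriv (fun t' => gerstnerZ k m t' a' b) t) a
        * deriv (fun b' => gerstnerZ k m t a b') b
      + deriv (fun b' => deriv (fun t' => gerstnerZ k m t' a b') t) b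
        * deriv (fun a' => gerstnerZ k m t a' b) a
      = -(2 * k * m * Real.exp (2 * k * b))
    ∧ (deriv (fun b' => deriv (fun t' => gerstnerX k c m t' a b') t) b
        * deriv (fun a' => gerstnerX k c m t a' b) a
      - deriv (fun a' => deriv (fun t' => gerstnerX k c m t' a' b) t) a
        * deriv (fun b' => gerstnerX k c m t a b') b
      - deriv (fun a' => deriv (fun t' => gerstnerZ k m t' a' b) t) a
        * deriv (fun b' => gerstnerZ k m t a b') b
      + deriv (fun b' => deriv (fun t' => gerstnerZ k m t' a b') t) b
        * deriv (fun a' => gerstnerZ k m t a' b) a) / (1 - Real.exp (2 * k * b))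
      = -(2 * k * m * Real.exp (2 * k * b)) / (1 - Real.exp (2 * k * b)) := by
  have hk' : k ≠ 0 := ne_of_gt hk
  have hnum : deriv (fun b' => deriv (fun t' => gerstnerX k c m t' a b') t) b
        * deriv (fun a' => gerstnerX k c m t a' b) a
      - deriv (fun a' => deriv (fun t' => gerstnerX k c m t' a' b) t) a
        * deriv (fun b' => gerstnerX k c m t a b') b
      - deriv (fun a' => deriv (fun t' => gerstnerZ k m t' a' b) t) a
        * deriv (fun b' => gerstnerZ k m t a b') b
      + deriv (fun b' => deriv (fun t' => gerstnerZ k m t' a b') t) b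
        * deriv (fun a' => gerstnerZ k m t a' b) a
      = -(2 * k * m * Real.exp (2 * k * b)) := by
    rw [derivXtb k c m hk' t a b, derivXa k c m hk' t a b, derivXta k c m hk' t a b,
      derivXb k c m hk' t a b, derivZta k m hk' t a b, derivZb k m hk' t a b,
      derivZtb k m hk' t a b, derivZa k m hk' t a b]
    have hexp : Real.exp (2 * k * b) = Real.exp (k * b) * Real.exp (k * b) := by
      rw [← Real.exp_add]; ring_nf
    rw [hexp]
    have hsc := Real.sin_sq_add_cos_sq (k * (a - m * t))
    linear_combination (-(2 * k * m * Real.exp (k * b) * Real.exp (k * b))) * hsc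
  exact ⟨hnum, by rw [hnum]⟩
end

section
/- Euler equation constraint (first component): for the Gerstner map, the identity P_a = −ρ(X_{tt} + 2ωZ_t)X_a − ρ(Z_{tt} − 2ωX_t + g)Z_a reduces to P_a = −ρ·e^{kb}·sin(k(a−mt))·(km² + 2ωc − g); hence P_a vanishes identically if and only if km² + 2ωc − g = 0 (for all a, t, b, assuming ρ > 0, k > 0). -/
section helpers
variable (k c m a b t : ℝ)

lemma hθt : HasDerivAt (fun t' : ℝ => k * (a - m * t')) (-(k * m)) t := by
  have h := (((hasDerivAt_id t).const_mul m).const_sub a).const_mul k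
  simpa using h

lemma hθa : HasDerivAt (fun a' : ℝ => k * (a' - m * t)) k a := by
  have h := (((hasDerivAt_id a).sub_const (m * t))).const_mul k
  simpa using h

lemma hXt (hk : k ≠ 0) : HasDerivAt (fun t' => gerstnerX k c m t' a b)
    ((c - m) + Real.exp (k * b) * m * Real.cos (k * (a - m * t))) t := by
  have hs := (Real.hasDerivAt_sin (k * (a - m * t))).comp t (hθt k m a t)
  have h := (((hasDerivAt_id t).const_mul (c - m)).const_add a).sub
      (hs.const_mul (Real.exp (k * b) / k))
  refine h.congr_deriv ?_
  field_simp
  ring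

lemma hZt (hk : k ≠ 0) : HasDerivAt (fun t' => gerstnerZ k m t' a b)
    (Real.exp (k * b) * m * Real.sin (k * (a - m * t))) t := by
  have hs := (Real.hasDerivAt_cos (k * (a - m * t))).comp t (hθt k m a t)
  have h := (hs.const_mul (Real.exp (k * b) / k)).const_add b
  refine h.congr_deriv ?_
  field_simp

lemma hXtt (hk : k ≠ 0) : deriv (deriv (fun t' => gerstnerX k c m t' a b)) t
    = Real.exp (k * b) * k * m ^ 2 * Real.sin (k * (a - m * t)) := by
  have h1 : deriv (fun t' => gerstnerX k c m t' a b)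
      = fun t' => (c - m) + Real.exp (k * b) * m * Real.cos (k * (a - m * t')) := by
    funext t'; exact (hXt k c m a b t' hk).deriv
  rw [h1]
  have hc := (Real.hasDerivAt_cos (k * (a - m * t))).comp t (hθt k m a t)
  have h : HasDerivAt (fun t' => (c - m) + Real.exp (k * b) * m * Real.cos (k * (a - m * t')))
      (Real.exp (k * b) * m * (-Real.sin (k * (a - m * t)) * -(k * m))) t :=
    (hc.const_mul (Real.exp (k * b) * m)).const_add (c - m)
  rw [h.deriv]; ring

lemma hZtt (hk : k ≠ 0) : deriv (deriv (fun t' => gerstnerZ k m t' a b)) t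
    = -(Real.exp (k * b) * k * m ^ 2 * Real.cos (k * (a - m * t))) := by
  have h1 : deriv (fun t' => gerstnerZ k m t' a b)
      = fun t' => Real.exp (k * b) * m * Real.sin (k * (a - m * t')) := by
    funext t'; exact (hZt k m a b t' hk).deriv
  rw [h1]
  have hs := (Real.hasDerivAt_sin (k * (a - m * t))).comp t (hθt k m a t)
  have h : HasDerivAt (fun t' => Real.exp (k * b) * m * Real.sin (k * (a - m * t')))
      (Real.exp (k * b) * m * (Real.cos (k * (a - m * t)) * -(k * m))) t :=
    hs.const_mul (Real.exp (k * b) * m)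
  rw [h.deriv]; ring

lemma hXa (hk : k ≠ 0) : deriv (fun a' => gerstnerX k c m t a' b) a
    = 1 - Real.exp (k * b) * Real.cos (k * (a - m * t)) := by
  have hs := (Real.hasDerivAt_sin (k * (a - m * t))).comp a (hθa k m a t)
  have h : HasDerivAt (fun a' => gerstnerX k c m t a' b)
      (1 - Real.exp (k * b) / k * (Real.cos (k * (a - m * t)) * k)) a :=
    (((hasDerivAt_id a).add_const ((c - m) * t))).sub
      (hs.const_mul (Real.exp (k * b) / k))
  rw [h.deriv]; field_simp

lemma hZa (hk : k ≠ 0) : deriv (fun a' => gerstnerZ k m t a' b) a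
    = -(Real.exp (k * b) * Real.sin (k * (a - m * t))) := by
  have hc := (Real.hasDerivAt_cos (k * (a - m * t))).comp a (hθa k m a t)
  have h : HasDerivAt (fun a' => gerstnerZ k m t a' b)
      (Real.exp (k * b) / k * (-Real.sin (k * (a - m * t)) * k)) a :=
    (hc.const_mul (Real.exp (k * b) / k)).const_add b
  rw [h.deriv]; field_simp

end helpers

/-- the first Euler equation component reduces to
P_a = −ρ e^{kb} sin(k(a−mt)) (km² + 2ωc − g), and it vanishes identically iff
km² + 2ωc − g = 0. -/
theorem stmt_7 (k ρ ω g c m : ℝ) (hk : 0 < k) (hρ : 0 < ρ) (hω : 0 ≤ ω) (hg : 0 < g) :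
    (∀ t a b : ℝ,
      -ρ * (deriv (deriv (fun t' => gerstnerX k c m t' a b)) t
              + 2 * ω * deriv (fun t' => gerstnerZ k m t' a b) t)
          * deriv (fun a' => gerstnerX k c m t a' b) a
        - ρ * (deriv (deriv (fun t' => gerstnerZ k m t' a b)) t
              - 2 * ω * deriv (fun t' => gerstnerX k c m t' a b) t + g)
          * deriv (fun a' => gerstnerZ k m t a' b) a
      = -ρ * Real.exp (k * b) * Real.sin (k * (a - m * t)) * (k * m ^ 2 + 2 * ω * c - g))
    ∧ ((∀ t a b : ℝ,
      -ρ * (deriv (deriv (fun t' => gerstnerX k c m t' a b)) t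
              + 2 * ω * deriv (fun t' => gerstnerZ k m t' a b) t)
          * deriv (fun a' => gerstnerX k c m t a' b) a
        - ρ * (deriv (deriv (fun t' => gerstnerZ k m t' a b)) t
              - 2 * ω * deriv (fun t' => gerstnerX k c m t' a b) t + g)
          * deriv (fun a' => gerstnerZ k m t a' b) a = 0)
      ↔ k * m ^ 2 + 2 * ω * c - g = 0) := by
  have hk' : k ≠ 0 := ne_of_gt hk
  have key : ∀ t a b : ℝ,
      -ρ * (deriv (deriv (fun t' => gerstnerX k c m t' a b)) t
              + 2 * ω * deriv (fun t' => gerstnerZ k m t' a b) t)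
          * deriv (fun a' => gerstnerX k c m t a' b) a
        - ρ * (deriv (deriv (fun t' => gerstnerZ k m t' a b)) t
              - 2 * ω * deriv (fun t' => gerstnerX k c m t' a b) t + g)
          * deriv (fun a' => gerstnerZ k m t a' b) a
      = -ρ * Real.exp (k * b) * Real.sin (k * (a - m * t)) * (k * m ^ 2 + 2 * ω * c - g) := by
    intro t a b
    rw [hXtt k c m a b t hk', hZtt k m a b t hk', (hXt k c m a b t hk').deriv,
      (hZt k m a b t hk').deriv, hXa k c m a b t hk', hZa k m a b t hk']
    ring
  refine ⟨key, ?_, ?_⟩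
  · intro h
    have h0 := h 0 (Real.pi / (2 * k)) 0
    rw [key 0 (Real.pi / (2 * k)) 0] at h0
    have : k * (Real.pi / (2 * k) - m * 0) = Real.pi / 2 := by
      field_simp; ring
    rw [this] at h0
    simp [Real.sin_pi_div_two] at h0
    rcases h0 with h0 | h0
    · exact absurd h0 (ne_of_gt hρ)
    · linarith [h0]
  · intro h t a b
    rw [key t a b, h, mul_zero]
end

section
/- Stagnation points for geophysical waves: if m = 0, then the Lagrangian velocity of every particle is (X_t, Z_t) = (c, 0); conversely, if m ≠ 0, then there is no pair (a,b) with b ≤ 0 such that (X_t, Z_t)(t,a,b) = (c, 0) for all t. -/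
lemma hasDerivX (k c m t a b : ℝ) (hk : k ≠ 0) :
    HasDerivAt (fun t' => gerstnerX k c m t' a b)
      ((c - m) + m * Real.exp (k * b) * Real.cos (k * (a - m * t))) t := by
  have hu : HasDerivAt (fun t' : ℝ => k * (a - m * t')) (-(k * m)) t := by
    have := ((hasDerivAt_const t a).sub ((hasDerivAt_id t).const_mul m)).const_mul k
    simpa using this
  have hs : HasDerivAt (fun t' : ℝ => Real.sin (k * (a - m * t')))
      (Real.cos (k * (a - m * t)) * (-(k * m))) t := (Real.hasDerivAt_sin _).comp t hu
  have h1 : HasDerivAt (fun t' : ℝ => a + (c - m) * t') (c - m) t := by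
    exact ((hasDerivAt_const t a).add ((hasDerivAt_id t).const_mul (c - m))).congr_deriv (by simp)
  have := h1.sub (hs.const_mul (Real.exp (k * b) / k))
  refine this.congr_deriv ?_
  field_simp; ring

lemma hasDerivZ (k m t a b : ℝ) (hk : k ≠ 0) :
    HasDerivAt (fun t' => gerstnerZ k m t' a b)
      (m * Real.exp (k * b) * Real.sin (k * (a - m * t))) t := by
  have hu : HasDerivAt (fun t' : ℝ => k * (a - m * t')) (-(k * m)) t := by
    have := ((hasDerivAt_const t a).sub ((hasDerivAt_id t).const_mul m)).const_mul k
    simpa using this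
  have hcs : HasDerivAt (fun t' : ℝ => Real.cos (k * (a - m * t')))
      (-Real.sin (k * (a - m * t)) * (-(k * m))) t := (Real.hasDerivAt_cos _).comp t hu
  have := (hasDerivAt_const t b).add (hcs.const_mul (Real.exp (k * b) / k))
  refine this.congr_deriv ?_
  field_simp; ring

/-- if m = 0 every particle has velocity (c,0); if m ≠ 0 no particle with b ≤ 0
has velocity (c,0) for all times. -/
theorem stmt_15 (k c m : ℝ) (hk : 0 < k) :
    (m = 0 → ∀ t a b : ℝ,
      deriv (fun t' => gerstnerX k c m t' a b) t = c
      ∧ deriv (fun t' => gerstnerZ k m t' a b) t = 0)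
    ∧ (m ≠ 0 → ¬ ∃ a b : ℝ, b ≤ 0 ∧ ∀ t : ℝ,
      deriv (fun t' => gerstnerX k c m t' a b) t = c
      ∧ deriv (fun t' => gerstnerZ k m t' a b) t = 0) := by
  have hk' := hk.ne'
  constructor
  · intro hm t a b
    constructor
    · rw [(hasDerivX k c m t a b hk').deriv, hm]; ring
    · rw [(hasDerivZ k m t a b hk').deriv, hm]; ring
  · rintro hm ⟨a, b, _, h⟩
    set t := (a - Real.pi / (2 * k)) / m with ht
    have hz := (h t).2
    rw [(hasDerivZ k m t a b hk').deriv] at hz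
    have harg : k * (a - m * t) = Real.pi / 2 := by
      rw [ht]; field_simp; ring
    rw [harg, Real.sin_pi_div_two, mul_one] at hz
    exact (mul_ne_zero hm (Real.exp_pos _).ne') hz
end
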